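/- arXiv:2107.03542 — 2 statements merged into one kernel-verified Lean document; each statement's English description precedes it below -/
import Mathlib

section
/- Let m, r be positive integers and let x, y ∈ ℝ^{mr} both be sorted in decreasing order with x majorized by y. Define X_k = ∑_{j=1}^{r} x_{(k-1)r+j} and Y_k = ∑_{j=1}^{r} y_{(k-1)r+j} for 1 ≤ k ≤ m. Then X is majorized by Y. -/
open Finset

/-- The index `(k-1)·r + j` (0-indexed: `k·r + j`) inside `Fin (m * r)`. -/
def blockIdx {m r : ℕ} (k : Fin m) (j : Fin r) : Fin (m * r) :=
  ⟨k.val * r + j.val, by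
    calc k.val * r + j.val < k.val * r + r := Nat.add_lt_add_left j.isLt _
      _ = (k.val + 1) * r := by ring
      _ ≤ m * r := Nat.mul_le_mul_right _ k.isLt⟩

/-- The sum of the `k` largest entries of `v` (the maximum of `∑ i in s, v i`
over subsets `s` of cardinality `k`), via `sSup`. -/
noncomputable def kMaxSum {n : ℕ} (v : Fin n → ℝ) (k : ℕ) : ℝ :=
  sSup {t : ℝ | ∃ s : Finset (Fin n), s.card = k ∧ t = ∑ i ∈ s, v i}

/-- `x` is majorized by `y`: for every `1 ≤ k ≤ n` the sum of the `k` largest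
entries of `x` is at most that of `y`, and the total sums agree. -/
def Majorizes {n : ℕ} (x y : Fin n → ℝ) : Prop :=
  (∀ k : ℕ, 1 ≤ k → k ≤ n → kMaxSum x k ≤ kMaxSum y k) ∧ (∑ i, x i = ∑ i, y i)

lemma strictMono_fin_le {k n : ℕ} {f : Fin k → Fin n} (hf : StrictMono f) (i : Fin k) :
    (i : ℕ) ≤ (f i : ℕ) := by
  obtain ⟨i, hi⟩ := i
  induction i with
  | zero => simp
  | succ j ih =>
    have hj : j < k := Nat.lt_of_succ_lt hi
    have h2 : f ⟨j, hj⟩ < f ⟨j + 1, hi⟩ := hf (by simp [Fin.lt_def])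
    exact Nat.succ_le_of_lt (lt_of_le_of_lt (ih hj) h2)

lemma kMaxSum_eq {n : ℕ} {v : Fin n → ℝ} (hv : Antitone v) {k : ℕ} (hk : k ≤ n) :
    kMaxSum v k = ∑ i : Fin k, v (Fin.castLE hk i) := by
  apply IsGreatest.csSup_eq
  constructor
  · refine ⟨(univ : Finset (Fin k)).map (Fin.castLEEmb hk), by simp, ?_⟩
    rw [Finset.sum_map]
    rfl
  · rintro t ⟨s, hs, rfl⟩
    have hset : s = (univ : Finset (Fin k)).map (s.orderEmbOfFin hs).toEmbedding := by
      ext a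
      have := Finset.range_orderEmbOfFin s hs
      simp only [Finset.mem_map, Finset.mem_univ, true_and, RelEmbedding.coe_toEmbedding]
      constructor
      · intro ha
        have : a ∈ Set.range (s.orderEmbOfFin hs) := this ▸ (by exact_mod_cast ha)
        exact this
      · rintro ⟨i, rfl⟩
        exact Finset.orderEmbOfFin_mem s hs i
    rw [hset, Finset.sum_map]
    apply Finset.sum_le_sum
    intro i _
    apply hv
    rw [Fin.le_def]
    exact strictMono_fin_le (s.orderEmbOfFin hs).strictMono i

theorem stmt5 (m r : ℕ) (hm : 0 < m) (hr : 0 < r)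
    (x y : Fin (m * r) → ℝ) (hx : Antitone x) (hy : Antitone y)
    (hxy : Majorizes x y)
    (X Y : Fin m → ℝ)
    (hX : ∀ k, X k = ∑ j : Fin r, x (blockIdx k j))
    (hY : ∀ k, Y k = ∑ j : Fin r, y (blockIdx k j)) :
    Majorizes X Y := by
  have hXa : Antitone X := by
    intro a b hab
    rw [hX, hX]
    apply Finset.sum_le_sum
    intro j _
    apply hx
    rw [Fin.le_def]
    exact Nat.add_le_add_right (Nat.mul_le_mul_right r hab) _
  have hYa : Antitone Y := by
    intro a b hab
    rw [hY, hY]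
    apply Finset.sum_le_sum
    intro j _
    apply hy
    rw [Fin.le_def]
    exact Nat.add_le_add_right (Nat.mul_le_mul_right r hab) _
  -- block sums reindexing
  have key : ∀ (v : Fin (m * r) → ℝ) (k : ℕ) (hkm : k ≤ m),
      (∑ a : Fin k, ∑ j : Fin r, v (blockIdx (Fin.castLE hkm a) j)) =
      ∑ i : Fin (k * r), v (Fin.castLE (Nat.mul_le_mul_right r hkm) i) := by
    intro v k hkm
    have h1 : (∑ a : Fin k, ∑ j : Fin r, v (blockIdx (Fin.castLE hkm a) j)) =
        ∑ p : Fin k × Fin r, v (blockIdx (Fin.castLE hkm p.1) p.2) :=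
      (Fintype.sum_prod_type (fun p : Fin k × Fin r => v (blockIdx (Fin.castLE hkm p.1) p.2))).symm
    rw [h1]
    apply Fintype.sum_equiv finProdFinEquiv
    intro ⟨a, j⟩
    congr 1
    apply Fin.ext
    show a.val * r + j.val = j.val + r * a.val
    ring
  constructor
  · intro k hk1 hkm
    have hkr1 : 1 ≤ k * r := Nat.one_le_iff_ne_zero.mpr (Nat.mul_ne_zero
      (Nat.one_le_iff_ne_zero.mp hk1) (Nat.pos_iff_ne_zero.mp hr))
    have hkrm : k * r ≤ m * r := Nat.mul_le_mul_right r hkm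
    calc kMaxSum X k = ∑ a : Fin k, X (Fin.castLE hkm a) := kMaxSum_eq hXa hkm
      _ = ∑ i : Fin (k * r), x (Fin.castLE hkrm i) := by
          simp_rw [hX]; exact key x k hkm
      _ = kMaxSum x (k * r) := (kMaxSum_eq hx hkrm).symm
      _ ≤ kMaxSum y (k * r) := hxy.1 (k * r) hkr1 hkrm
      _ = ∑ i : Fin (k * r), y (Fin.castLE hkrm i) := kMaxSum_eq hy hkrm
      _ = ∑ a : Fin k, Y (Fin.castLE hkm a) := by
          simp_rw [hY]; exact (key y k hkm).symm
      _ = kMaxSum Y k := (kMaxSum_eq hYa hkm).symm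
  · have hmm : m ≤ m := le_refl m
    have hx' := key x m hmm
    have hy' := key y m hmm
    simp only [Fin.castLE_rfl, id] at hx' hy'
    calc ∑ i, X i = ∑ a : Fin m, ∑ j : Fin r, x (blockIdx a j) := by simp_rw [hX]
      _ = ∑ i : Fin (m * r), x (Fin.castLE (Nat.mul_le_mul_right r hmm) i) := key x m hmm
      _ = ∑ i, x i := by apply Finset.sum_congr rfl; intro i _; congr 1
      _ = ∑ i, y i := hxy.2
      _ = ∑ i : Fin (m * r), y (Fin.castLE (Nat.mul_le_mul_right r hmm) i) := by
          apply Finset.sum_congr rfl; intro i _; congr 1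
      _ = ∑ a : Fin m, ∑ j : Fin r, y (blockIdx a j) := (key y m hmm).symm
      _ = ∑ i, Y i := by simp_rw [hY]
end

section
/- Let m, r be positive integers, let p ∈ ℝ^{mr} have nonnegative entries, and let p↓ denote p rearranged in decreasing order. Define q_k = ∑_{j=1}^{r} p_{(k-1)r+j} and q↓_k = ∑_{j=1}^{r} (p↓)_{(k-1)r+j} for 1 ≤ k ≤ m. Then q is majorized by q↓. -/
open Finset

namespace MajAux

lemma kSet_finite {n : ℕ} (v : Fin n → ℝ) (k : ℕ) :
    {t : ℝ | ∃ s : Finset (Fin n), s.card = k ∧ t = ∑ i ∈ s, v i}.Finite := by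
  apply Set.Finite.subset (Finset.finite_toSet
    ((Finset.univ.powersetCard k).image fun s => ∑ i ∈ s, v i))
  rintro t ⟨s, hs, rfl⟩
  simp only [coe_image, Set.mem_image, mem_coe, Finset.mem_powersetCard]
  exact ⟨s, ⟨Finset.subset_univ s, hs⟩, rfl⟩

lemma le_kMaxSum {n : ℕ} (v : Fin n → ℝ) {k : ℕ} {s : Finset (Fin n)} (hs : s.card = k) :
    ∑ i ∈ s, v i ≤ kMaxSum v k :=
  le_csSup (kSet_finite v k).bddAbove ⟨s, hs, rfl⟩

lemma kMaxSum_le {n : ℕ} (v : Fin n → ℝ) {k : ℕ} (hk : k ≤ n) {B : ℝ}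
    (h : ∀ s : Finset (Fin n), s.card = k → ∑ i ∈ s, v i ≤ B) :
    kMaxSum v k ≤ B := by
  obtain ⟨s, -, hs⟩ := Finset.exists_subset_card_eq
    (show k ≤ (univ : Finset (Fin n)).card by simpa using hk)
  exact csSup_le ⟨_, s, hs, rfl⟩ (by rintro t ⟨u, hu, rfl⟩; exact h u hu)

lemma kMaxSum_comp {n : ℕ} (v : Fin n → ℝ) (σ : Equiv.Perm (Fin n)) (k : ℕ) :
    kMaxSum (fun i => v (σ i)) k = kMaxSum v k := by
  unfold kMaxSum
  congr 1
  ext t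
  constructor
  · rintro ⟨s, hs, rfl⟩
    exact ⟨s.map σ.toEmbedding, by simp [hs], by rw [Finset.sum_map]; rfl⟩
  · rintro ⟨s, hs, rfl⟩
    refine ⟨s.map σ.symm.toEmbedding, by simp [hs], ?_⟩
    rw [Finset.sum_map]; simp

/-- The first `k` indices of `Fin n`. -/
def firstK (n k : ℕ) : Finset (Fin n) := univ.filter fun i => i.val < k

lemma mem_firstK {n k : ℕ} {i : Fin n} : i ∈ firstK n k ↔ i.val < k := by
  simp [firstK]

lemma card_firstK {n k : ℕ} (hk : k ≤ n) : (firstK n k).card = k := by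
  have h : firstK n k =
      (Finset.range k).attachFin (fun a ha => lt_of_lt_of_le (Finset.mem_range.1 ha) hk) := by
    ext i; simp [firstK, Finset.mem_attachFin]
  rw [h, Finset.card_attachFin, Finset.card_range]

lemma sum_le_sum_firstK {n : ℕ} {v : Fin n → ℝ} (hv : Antitone v) {k : ℕ} (hk : k ≤ n)
    {s : Finset (Fin n)} (hs : s.card = k) :
    ∑ i ∈ s, v i ≤ ∑ i ∈ firstK n k, v i := by
  set t := firstK n k with ht
  have hct : t.card = k := card_firstK hk
  have h1 : ∑ i ∈ s \ t, v i + ∑ i ∈ s ∩ t, v i = ∑ i ∈ s, v i := by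
    have := Finset.sum_sdiff (f := v) (Finset.inter_subset_left (s₁ := s) (s₂ := t))
    rwa [Finset.sdiff_inter_self_left] at this
  have h2 : ∑ i ∈ t \ s, v i + ∑ i ∈ t ∩ s, v i = ∑ i ∈ t, v i := by
    have := Finset.sum_sdiff (f := v) (Finset.inter_subset_left (s₁ := t) (s₂ := s))
    rwa [Finset.sdiff_inter_self_left] at this
  have hcard : (s \ t).card = (t \ s).card := Finset.card_sdiff_comm (by rw [hs, hct])
  have hint : ∑ i ∈ s ∩ t, v i = ∑ i ∈ t ∩ s, v i := by rw [Finset.inter_comm]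
  have key : ∑ i ∈ s \ t, v i ≤ ∑ i ∈ t \ s, v i := by
    rcases Finset.eq_empty_or_nonempty (s \ t) with he | ⟨a, ha⟩
    · have he' : (t \ s) = ∅ := Finset.card_eq_zero.1 (by rw [← hcard, he, Finset.card_empty])
      simp [he, he']
    · have hkn : k < n := by
        have h3 : ¬ a.val < k := fun hlt =>
          (Finset.mem_sdiff.1 ha).2 (by rw [ht]; exact mem_firstK.2 hlt)
        exact lt_of_le_of_lt (le_of_not_gt h3) a.isLt
      calc ∑ i ∈ s \ t, v i ≤ (s \ t).card • v ⟨k, hkn⟩ := by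
            apply Finset.sum_le_card_nsmul
            intro i hi
            have h3 : ¬ i.val < k := fun hlt =>
              (Finset.mem_sdiff.1 hi).2 (by rw [ht]; exact mem_firstK.2 hlt)
            exact hv (Fin.le_def.2 (le_of_not_gt h3))
        _ = (t \ s).card • v ⟨k, hkn⟩ := by rw [hcard]
        _ ≤ ∑ i ∈ t \ s, v i := by
            apply Finset.card_nsmul_le_sum
            intro i hi
            have h3 : i.val < k := by
              have h4 := (Finset.mem_sdiff.1 hi).1
              rw [ht] at h4
              exact mem_firstK.1 h4
            exact hv (Fin.le_def.2 (le_of_lt h3))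
  linarith

lemma kMaxSum_antitone_eq {n : ℕ} {v : Fin n → ℝ} (hv : Antitone v) {k : ℕ} (hk : k ≤ n) :
    kMaxSum v k = ∑ i ∈ firstK n k, v i :=
  le_antisymm (kMaxSum_le v hk fun _ hs => sum_le_sum_firstK hv hk hs)
    (le_kMaxSum v (card_firstK hk))

variable {m r : ℕ}

lemma blockIdx_injective (hr : 0 < r) :
    Function.Injective (fun x : Fin m × Fin r => blockIdx x.1 x.2) := by
  rintro ⟨a, j⟩ ⟨b, l⟩ h
  have h' : a.val * r + j.val = b.val * r + l.val := congrArg Fin.val h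
  rw [mul_comm a.val r, mul_comm b.val r] at h'
  have ha : a.val = b.val := by
    have d1 : (r * a.val + j.val) / r = a.val := by
      rw [Nat.mul_add_div hr, Nat.div_eq_of_lt j.isLt, Nat.add_zero]
    have d2 : (r * b.val + l.val) / r = b.val := by
      rw [Nat.mul_add_div hr, Nat.div_eq_of_lt l.isLt, Nat.add_zero]
    rw [← d1, ← d2, h']
  have hj : j.val = l.val := by
    have d1 : (r * a.val + j.val) % r = j.val := by
      rw [Nat.mul_add_mod, Nat.mod_eq_of_lt j.isLt]
    have d2 : (r * b.val + l.val) % r = l.val := by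
      rw [Nat.mul_add_mod, Nat.mod_eq_of_lt l.isLt]
    rw [← d1, ← d2, h']
  exact Prod.ext (Fin.ext ha) (Fin.ext hj)

/-- The set of all indices in the blocks indexed by `S`. -/
def blockImage (S : Finset (Fin m)) : Finset (Fin (m * r)) :=
  (S ×ˢ (univ : Finset (Fin r))).image fun x => blockIdx x.1 x.2

lemma card_blockImage (hr : 0 < r) (S : Finset (Fin m)) :
    (blockImage (r := r) S).card = S.card * r := by
  rw [blockImage, Finset.card_image_of_injective _ (blockIdx_injective hr),
    Finset.card_product, Finset.card_univ, Fintype.card_fin]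

lemma sum_blockImage (hr : 0 < r) (S : Finset (Fin m)) (f : Fin (m * r) → ℝ) :
    ∑ i ∈ blockImage S, f i = ∑ a ∈ S, ∑ j : Fin r, f (blockIdx a j) := by
  rw [blockImage, Finset.sum_image (fun x _ y _ h => blockIdx_injective hr h),
    Finset.sum_product]

lemma blockImage_univ (hr : 0 < r) : blockImage (r := r) (univ : Finset (Fin m)) = univ := by
  apply Finset.eq_univ_of_card
  rw [card_blockImage hr, Finset.card_univ, Fintype.card_fin, Fintype.card_fin]

lemma blockImage_firstK (hr : 0 < r) {k : ℕ} (hk : k ≤ m) :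
    blockImage (firstK m k) = firstK (m * r) (k * r) := by
  apply Finset.eq_of_subset_of_card_le
  · rintro i hi
    obtain ⟨⟨a, j⟩, hmem, rfl⟩ := Finset.mem_image.1 hi
    have ha : a.val < k := mem_firstK.1 (Finset.mem_product.1 hmem).1
    apply mem_firstK.2
    show a.val * r + j.val < k * r
    calc a.val * r + j.val < a.val * r + r := Nat.add_lt_add_left j.isLt _
      _ = (a.val + 1) * r := by ring
      _ ≤ k * r := Nat.mul_le_mul_right _ ha
  · rw [card_firstK (Nat.mul_le_mul_right r hk), card_blockImage hr, card_firstK hk]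

end MajAux

open MajAux

theorem stmt6 (m r : ℕ) (hm : 0 < m) (hr : 0 < r)
    (p : Fin (m * r) → ℝ) (hp : ∀ i, 0 ≤ p i)
    -- `pd` is the decreasing rearrangement `p↓` of `p`
    (pd : Fin (m * r) → ℝ) (hpd : Antitone pd)
    (hperm : ∃ σ : Equiv.Perm (Fin (m * r)), ∀ i, pd i = p (σ i))
    (q qd : Fin m → ℝ)
    (hq : ∀ k, q k = ∑ j : Fin r, p (blockIdx k j))
    (hqd : ∀ k, qd k = ∑ j : Fin r, pd (blockIdx k j)) :
    Majorizes q qd := by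
  obtain ⟨σ, hσ⟩ := hperm
  have hpd_eq : pd = fun i => p (σ i) := funext hσ
  constructor
  · intro k hk1 hkm
    apply kMaxSum_le q hkm
    intro s hs
    have hkr : k * r ≤ m * r := Nat.mul_le_mul_right r hkm
    calc ∑ a ∈ s, q a = ∑ i ∈ blockImage s, p i := by
          rw [sum_blockImage hr]
          exact Finset.sum_congr rfl fun a _ => hq a
      _ ≤ kMaxSum p (k * r) := le_kMaxSum p (by rw [card_blockImage hr, hs])
      _ = kMaxSum pd (k * r) := by rw [hpd_eq, kMaxSum_comp]
      _ = ∑ i ∈ firstK (m * r) (k * r), pd i := kMaxSum_antitone_eq hpd hkr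
      _ = ∑ a ∈ firstK m k, qd a := by
          rw [← blockImage_firstK hr hkm, sum_blockImage hr]
          exact Finset.sum_congr rfl fun a _ => (hqd a).symm
      _ ≤ kMaxSum qd k := le_kMaxSum qd (card_firstK hkm)
  · calc ∑ a, q a = ∑ i ∈ blockImage univ, p i := by
          rw [sum_blockImage hr]
          exact Finset.sum_congr rfl fun a _ => hq a
      _ = ∑ i, p i := by rw [blockImage_univ hr]
      _ = ∑ i, pd i := by rw [hpd_eq]; exact (Equiv.sum_comp σ p).symm
      _ = ∑ i ∈ blockImage univ, pd i := by rw [blockImage_univ hr]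
      _ = ∑ a, qd a := by
          rw [sum_blockImage hr]
          exact Finset.sum_congr rfl fun a _ => (hqd a).symm
end
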